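/- Let T be a tree with vertex cover number c ≥ 1. Then T has at most 2c − 1 vertices of degree at least two. -/

import Mathlib

open SimpleGraph

/-- Key step: if `c` is adjacent to `v`, `v ≠ r`, and `c` is not the second vertex of the
chosen path `pv : Path v r`, then `c ≠ r` and the second vertex of any path `pc : Path c r`
is `v`. -/
lemma stmt_6_aux {V : Type*} [DecidableEq V] {G : SimpleGraph V} (hac : G.IsAcyclic) {r v c : V}
    (pv : G.Path v r) (pc : G.Path c r) (hadj : G.Adj c v)
    (hc : c ≠ pv.1.getVert 1) : c ≠ r ∧ pc.1.getVert 1 = v := by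
  have hcs : c ∉ pv.1.support := by
    intro hmem
    have hq : (pv.1.takeUntil c hmem).IsPath := pv.2.takeUntil hmem
    have hq' : (SimpleGraph.Walk.cons hadj.symm SimpleGraph.Walk.nil : G.Walk v c).IsPath := by
      simp [SimpleGraph.Walk.cons_isPath_iff, hadj.ne']
    have heq := hac.path_unique ⟨_, hq⟩ ⟨_, hq'⟩
    have hval : pv.1.takeUntil c hmem = SimpleGraph.Walk.cons hadj.symm SimpleGraph.Walk.nil := by
      simpa using congrArg Subtype.val heq
    have hlen : (pv.1.takeUntil c hmem).length = 1 := by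
      rw [hval]; simp
    have hspec := pv.1.take_spec hmem
    have hget : pv.1.getVert 1 = c := by
      conv_lhs => rw [← hspec]
      rw [SimpleGraph.Walk.getVert_append]
      simp [hlen, SimpleGraph.Walk.getVert_zero]
    exact hc hget.symm
  have hw : (SimpleGraph.Walk.cons hadj pv.1).IsPath := pv.2.cons hcs
  have hcr : c ≠ r := by
    intro h
    exact hcs (h ▸ pv.1.end_mem_support)
  refine ⟨hcr, ?_⟩
  have heq := hac.path_unique pc ⟨_, hw⟩
  have hval : pc.1 = SimpleGraph.Walk.cons hadj pv.1 := by
    simpa using congrArg Subtype.val heq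
  rw [hval, SimpleGraph.Walk.getVert_cons _ _ one_ne_zero, Nat.sub_self, SimpleGraph.Walk.getVert_zero]

/-- A tree with a vertex cover of size `c ≥ 1` has at most `2c - 1` vertices of degree
at least two. -/
theorem stmt_6 {V : Type*} [Fintype V] [DecidableEq V] (G : SimpleGraph V)
    [DecidableRel G.Adj] (hconn : G.Connected) (hac : G.IsAcyclic)
    (C : Finset V) (hcov : ∀ a b : V, G.Adj a b → a ∈ C ∨ b ∈ C) (hC : 1 ≤ C.card) :
    (Finset.univ.filter fun v : V => 2 ≤ G.degree v).card ≤ 2 * C.card - 1 := by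
  classical
  obtain ⟨r, hr⟩ := Finset.card_pos.mp hC
  set I : Finset V := Finset.univ.filter fun v : V => 2 ≤ G.degree v with hI
  -- choose a path from each vertex to r
  have hpath : ∀ v : V, G.Path v r := fun v =>
    (Classical.choice (hconn.preconnected v r)).toPath
  set pth : ∀ v : V, G.Path v r := hpath with hpth
  set par : V → V := fun v => (pth v).1.getVert 1 with hpar
  set A : Finset V := I \ C with hA
  -- each v ∈ A has a neighbor in C different from its parent
  have hexists : ∀ v ∈ A, ∃ c, G.Adj c v ∧ c ∈ C ∧ c ≠ par v := by
    intro v hv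
    rw [hA, Finset.mem_sdiff, hI, Finset.mem_filter] at hv
    obtain ⟨⟨-, hdeg⟩, hvC⟩ := hv
    have hcard : 1 < (G.neighborFinset v).card := by
      rwa [G.card_neighborFinset_eq_degree]
    obtain ⟨c, hcmem, hcne⟩ := Finset.exists_mem_ne hcard (par v)
    rw [SimpleGraph.mem_neighborFinset] at hcmem
    refine ⟨c, hcmem.symm, ?_, hcne⟩
    rcases hcov v c hcmem with h | h
    · exact absurd h hvC
    · exact h
  choose! f hf1 hf2 hf3 using hexists
  -- f is injective on A with values in C \ {r}
  have hAcard : A.card ≤ C.card - 1 := by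
    have hmaps : ∀ v ∈ A, f v ∈ C.erase r := by
      intro v hv
      have := stmt_6_aux hac (pth v) (pth (f v)) (hf1 v hv) (hf3 v hv)
      exact Finset.mem_erase.mpr ⟨this.1, hf2 v hv⟩
    have hinj : ∀ v₁ ∈ A, ∀ v₂ ∈ A, f v₁ = f v₂ → v₁ = v₂ := by
      intro v₁ h₁ v₂ h₂ hfeq
      have e₁ := (stmt_6_aux hac (pth v₁) (pth (f v₁)) (hf1 v₁ h₁) (hf3 v₁ h₁)).2
      have e₂ := (stmt_6_aux hac (pth v₂) (pth (f v₂)) (hf1 v₂ h₂) (hf3 v₂ h₂)).2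
      rw [hfeq] at e₁
      rw [← e₁, e₂]
    calc A.card ≤ (C.erase r).card := Finset.card_le_card_of_injOn f hmaps hinj
    _ = C.card - 1 := Finset.card_erase_of_mem hr
  -- conclude
  have hsplit : I.card ≤ (I ∩ C).card + A.card := by
    rw [hA]
    have := Finset.card_sdiff_add_card_inter I C
    omega
  have h1 : (I ∩ C).card ≤ C.card := Finset.card_le_card (Finset.inter_subset_right)
  have : I.card ≤ C.card + (C.card - 1) := le_trans hsplit (by omega)
  omega
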